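/- Causal consistency for CCSK: any two coinitial and cofinal traces in the proved LTS for CCSK are causally equivalent. -/
import Mathlib


namespace CCSK

/-- Labels: names, co-names, and the silent action τ. -/
inductive Lab : Type
  | name : ℕ → Lab
  | coname : ℕ → Lab
  | tau : Lab
deriving DecidableEq

/-- Complement of a label. -/
def Lab.co : Lab → Lab
  | .name n => .coname n
  | .coname n => .name n
  | .tau => .tau

abbrev Key := ℕ

/-- CCSK processes (with a replication operator for the extended calculus). -/
inductive Proc : Type
  | nil : Proc
  | pre : Lab → Proc → Proc          -- α.X
  | kpre : Lab → Key → Proc → Proc   -- α[k].X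
  | par : Proc → Proc → Proc
  | sum : Proc → Proc → Proc
  | res : Proc → ℕ → Proc            -- X \ a
  | repl : Proc → Proc               -- !X
deriving DecidableEq

/-- Keys occurring in a process. -/
def Proc.keys : Proc → Set Key
  | .nil => ∅
  | .pre _ X => X.keys
  | .kpre _ k X => insert k X.keys
  | .par X Y => X.keys ∪ Y.keys
  | .sum X Y => X.keys ∪ Y.keys
  | .res X _ => X.keys
  | .repl X => X.keys

/-- A process is standard when it contains no keys. -/
def Proc.std (X : Proc) : Prop := X.keys = ∅

/-- Multiset of keyed-prefix occurrences (label, key). -/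
def Proc.keyed : Proc → Multiset (Lab × Key)
  | .nil => 0
  | .pre _ X => X.keyed
  | .kpre a k X => (a, k) ::ₘ X.keyed
  | .par X Y => X.keyed + Y.keyed
  | .sum X Y => X.keyed + Y.keyed
  | .res X _ => X.keyed
  | .repl X => X.keyed

/-- Enhanced keyed labels. -/
inductive ELab : Type
  | base : Lab → Key → ELab          -- α[k]
  | parL : ELab → ELab               -- |_L θ
  | parR : ELab → ELab               -- |_R θ
  | bang : ELab → ELab               -- !θ (replication)
  | syn : ELab → ELab → ELab         -- ⟨θ_L, θ_R⟩
deriving DecidableEq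

/-- Underlying action label ℓ(θ). -/
def ELab.act : ELab → Lab
  | .base a _ => a
  | .parL θ => θ.act
  | .parR θ => θ.act
  | .bang θ => θ.act
  | .syn _ _ => .tau

/-- Key of an enhanced keyed label. -/
def ELab.key : ELab → Key
  | .base _ k => k
  | .parL θ => θ.key
  | .parR θ => θ.key
  | .bang θ => θ.key
  | .syn θ _ => θ.key

/-- Dependency relation ⋖ on enhanced keyed labels (including the extension
for replication labels). -/
inductive Dep : ELab → ELab → Prop
  | base (a : Lab) (k : Key) (θ : ELab) : Dep (.base a k) θ
  | parL {θ θ'} : Dep θ θ' → Dep (.parL θ) (.parL θ')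
  | parR {θ θ'} : Dep θ θ' → Dep (.parR θ) (.parR θ')
  | synSrcL {θL θR θ} : Dep θL θ → Dep (.syn θL θR) θ
  | synSrcR {θL θR θ} : Dep θR θ → Dep (.syn θL θR) θ
  | synTgtL {θ θL θR} : Dep θ θL → Dep θ (.syn θL θR)
  | synTgtR {θ θL θR} : Dep θ θR → Dep θ (.syn θL θR)
  | synSynL {θL θR θL' θR'} : Dep θL θL' → Dep (.syn θL θR) (.syn θL' θR')
  | synSynR {θL θR θL' θR'} : Dep θR θR' → Dep (.syn θL θR) (.syn θL' θR')
  | bangBang (θ : ELab) : Dep (.bang θ) (.bang θ)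
  | bangParL (θ θ' : ELab) : Dep (.bang θ) (.parL θ')
  | bangParRSynL (θL θR θ'' : ELab) : Dep (.bang (.syn θL θR)) (.parR (.parL θ''))
  | bangParRSynR (θL θR θ'' : ELab) : Dep (.bang (.syn θL θR)) (.parR (.parR θ''))
  | bangParR {θ θ' : ELab} : Dep θ θ' → Dep (.bang θ) (.parR θ')

/-- Concurrency of labels: no dependency in either direction. -/
def Conc (θ₁ θ₂ : ELab) : Prop := ¬ Dep θ₁ θ₂ ∧ ¬ Dep θ₂ θ₁

/-- The proved forward LTS for CCSK (without replication rules). -/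
inductive Fwd : Proc → ELab → Proc → Prop
  | act {a k X} : Proc.std X → Fwd (.pre a X) (.base a k) (.kpre a k X)
  | pre {a : Lab} {k : Key} {X X' : Proc} {θ : ELab} : Fwd X θ X' → θ.key ≠ k →
      Fwd (.kpre a k X) θ (.kpre a k X')
  | res {X X' : Proc} {θ : ELab} {a : ℕ} : Fwd X θ X' → θ.act ≠ .name a → θ.act ≠ .coname a →
      Fwd (X.res a) θ (X'.res a)
  | parL {X X' Y : Proc} {θ : ELab} : Fwd X θ X' → θ.key ∉ Y.keys →
      Fwd (X.par Y) (.parL θ) (X'.par Y)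
  | parR {Y Y' X : Proc} {θ : ELab} : Fwd Y θ Y' → θ.key ∉ X.keys →
      Fwd (X.par Y) (.parR θ) (X.par Y')
  | syn {X X' Y Y' : Proc} {θ₁ θ₂ : ELab} : Fwd X θ₁ X' → Fwd Y θ₂ Y' →
      θ₁.act ≠ .tau → θ₂.act = θ₁.act.co → θ₂.key = θ₁.key →
      Fwd (X.par Y) (.syn (.parL θ₁) (.parR θ₂)) (X'.par Y')
  | sumL {X θ X' Y} : Fwd X θ X' → Proc.std Y → Fwd (X.sum Y) θ (X'.sum Y)
  | sumR {Y θ Y' X} : Fwd Y θ Y' → Proc.std X → Fwd (X.sum Y) θ (X.sum Y')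

/-- The proved backward LTS for CCSK (exact symmetric of the forward one).
`Bwd X θ Y` means `X ⇝[θ] Y`. -/
inductive Bwd : Proc → ELab → Proc → Prop
  | act {a k X} : Proc.std X → Bwd (.kpre a k X) (.base a k) (.pre a X)
  | pre {a : Lab} {k : Key} {X' X : Proc} {θ : ELab} : Bwd X' θ X → θ.key ≠ k →
      Bwd (.kpre a k X') θ (.kpre a k X)
  | res {X' X : Proc} {θ : ELab} {a : ℕ} : Bwd X' θ X → θ.act ≠ .name a → θ.act ≠ .coname a →
      Bwd (X'.res a) θ (X.res a)
  | parL {X' X Y : Proc} {θ : ELab} : Bwd X' θ X → θ.key ∉ Y.keys →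
      Bwd (X'.par Y) (.parL θ) (X.par Y)
  | parR {Y' Y X : Proc} {θ : ELab} : Bwd Y' θ Y → θ.key ∉ X.keys →
      Bwd (X.par Y') (.parR θ) (X.par Y)
  | syn {X' X Y' Y : Proc} {θ₁ θ₂ : ELab} : Bwd X' θ₁ X → Bwd Y' θ₂ Y →
      θ₁.act ≠ .tau → θ₂.act = θ₁.act.co → θ₂.key = θ₁.key →
      Bwd (X'.par Y') (.syn (.parL θ₁) (.parR θ₂)) (X.par Y)
  | sumL {X' θ X Y} : Bwd X' θ X → Proc.std Y → Bwd (X'.sum Y) θ (X.sum Y)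
  | sumR {Y' θ Y X} : Bwd Y' θ Y → Proc.std X → Bwd (X.sum Y') θ (X.sum Y)

/-- Combined LTS: `Step true` is forward, `Step false` is backward. -/
def Step : Bool → Proc → ELab → Proc → Prop
  | true => Fwd
  | false => Bwd

/-- Reachability: connected to a standard process by forward/backward moves. -/
def Reachable (X : Proc) : Prop :=
  ∃ X₀ : Proc, X₀.std ∧
    Relation.ReflTransGen (fun A B => ∃ d θ, Step d A θ B) X₀ X

/-- The proved forward LTS for CCSK extended with replication. -/
inductive FwdR : Proc → ELab → Proc → Prop
  | act {a k X} : Proc.std X → FwdR (.pre a X) (.base a k) (.kpre a k X)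
  | pre {a : Lab} {k : Key} {X X' : Proc} {θ : ELab} : FwdR X θ X' → θ.key ≠ k →
      FwdR (.kpre a k X) θ (.kpre a k X')
  | res {X X' : Proc} {θ : ELab} {a : ℕ} : FwdR X θ X' → θ.act ≠ .name a → θ.act ≠ .coname a →
      FwdR (X.res a) θ (X'.res a)
  | parL {X X' Y : Proc} {θ : ELab} : FwdR X θ X' → θ.key ∉ Y.keys →
      FwdR (X.par Y) (.parL θ) (X'.par Y)
  | parR {Y Y' X : Proc} {θ : ELab} : FwdR Y θ Y' → θ.key ∉ X.keys →
      FwdR (X.par Y) (.parR θ) (X.par Y')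
  | syn {X X' Y Y' : Proc} {θ₁ θ₂ : ELab} : FwdR X θ₁ X' → FwdR Y θ₂ Y' →
      θ₁.act ≠ .tau → θ₂.act = θ₁.act.co → θ₂.key = θ₁.key →
      FwdR (X.par Y) (.syn (.parL θ₁) (.parR θ₂)) (X'.par Y')
  | sumL {X θ X' Y} : FwdR X θ X' → Proc.std Y → FwdR (X.sum Y) θ (X'.sum Y)
  | sumR {Y θ Y' X} : FwdR Y θ Y' → Proc.std X → FwdR (X.sum Y) θ (X.sum Y')
  | repl1 {X X' : Proc} {θ : ELab} : FwdR X θ X' →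
      FwdR (.repl X) (.bang θ) ((Proc.repl X).par X')
  | repl2 {X X' X'' : Proc} {θ₁ θ₂ : ELab} : FwdR X θ₁ X' → FwdR X θ₂ X'' →
      θ₁.act ≠ .tau → θ₂.act = θ₁.act.co → θ₂.key = θ₁.key →
      FwdR (.repl X) (.bang (.syn (.parL θ₁) (.parR θ₂)))
        ((Proc.repl X).par (X'.par X''))

/-- The proved backward LTS for CCSK extended with replication. -/
inductive BwdR : Proc → ELab → Proc → Prop
  | act {a k X} : Proc.std X → BwdR (.kpre a k X) (.base a k) (.pre a X)
  | pre {a : Lab} {k : Key} {X' X : Proc} {θ : ELab} : BwdR X' θ X → θ.key ≠ k →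
      BwdR (.kpre a k X') θ (.kpre a k X)
  | res {X' X : Proc} {θ : ELab} {a : ℕ} : BwdR X' θ X → θ.act ≠ .name a → θ.act ≠ .coname a →
      BwdR (X'.res a) θ (X.res a)
  | parL {X' X Y : Proc} {θ : ELab} : BwdR X' θ X → θ.key ∉ Y.keys →
      BwdR (X'.par Y) (.parL θ) (X.par Y)
  | parR {Y' Y X : Proc} {θ : ELab} : BwdR Y' θ Y → θ.key ∉ X.keys →
      BwdR (X.par Y') (.parR θ) (X.par Y)
  | syn {X' X Y' Y : Proc} {θ₁ θ₂ : ELab} : BwdR X' θ₁ X → BwdR Y' θ₂ Y →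
      θ₁.act ≠ .tau → θ₂.act = θ₁.act.co → θ₂.key = θ₁.key →
      BwdR (X'.par Y') (.syn (.parL θ₁) (.parR θ₂)) (X.par Y)
  | sumL {X' θ X Y} : BwdR X' θ X → Proc.std Y → BwdR (X'.sum Y) θ (X.sum Y)
  | sumR {Y' θ Y X} : BwdR Y' θ Y → Proc.std X → BwdR (X.sum Y') θ (X.sum Y)
  | repl1 {X' X : Proc} {θ : ELab} : BwdR X' θ X →
      BwdR ((Proc.repl X).par X') (.bang θ) (.repl X)
  | repl2 {X' X'' X : Proc} {θ₁ θ₂ : ELab} : BwdR X' θ₁ X → BwdR X'' θ₂ X →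
      θ₁.act ≠ .tau → θ₂.act = θ₁.act.co → θ₂.key = θ₁.key →
      BwdR ((Proc.repl X).par (X'.par X''))
        (.bang (.syn (.parL θ₁) (.parR θ₂))) (.repl X)

/-- Combined extended LTS. -/
def StepR : Bool → Proc → ELab → Proc → Prop
  | true => FwdR
  | false => BwdR

/-- Reachability in the extended calculus. -/
def ReachableR (X : Proc) : Prop :=
  ∃ X₀ : Proc, X₀.std ∧
    Relation.ReflTransGen (fun A B => ∃ d θ, StepR d A θ B) X₀ X

/-- Traces: sequences of composable (forward or backward) transitions. -/
inductive Trace : Proc → Proc → Type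
  | nil (X : Proc) : Trace X X
  | cons {X Y Z : Proc} (d : Bool) (θ : ELab) (s : Step d X θ Y)
      (T : Trace Y Z) : Trace X Z

/-- Composition of traces. -/
def Trace.comp : {X Y Z : Proc} → Trace X Y → Trace Y Z → Trace X Z
  | _, _, _, .nil _, U => U
  | _, _, _, .cons d θ s T, U => .cons d θ s (Trace.comp T U)

/-- Length of a trace. -/
def Trace.length : {X Y : Proc} → Trace X Y → ℕ
  | _, _, .nil _ => 0
  | _, _, .cons _ _ _ T => Trace.length T + 1

/-- All transitions of a trace have direction `d`. -/
def Trace.AllDir (d : Bool) : {X Y : Proc} → Trace X Y → Prop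
  | _, _, .nil _ => True
  | _, _, .cons d' _ _ T => d' = d ∧ Trace.AllDir d T

/-- Causal equivalence of traces: the least equivalence relation, closed under
composition, cancelling a transition followed by its reverse, and swapping the
two sides of a concurrency square. -/
inductive CEq : {X Y : Proc} → Trace X Y → Trace X Y → Prop
  | refl {X Y} (T : Trace X Y) : CEq T T
  | symm {X Y} {T T' : Trace X Y} : CEq T T' → CEq T' T
  | trans {X Y} {T T' T'' : Trace X Y} : CEq T T' → CEq T' T'' → CEq T T''
  | congr {X Y Z : Proc} {d θ} (s : Step d X θ Y) {T T' : Trace Y Z} :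
      CEq T T' → CEq (Trace.cons d θ s T) (Trace.cons d θ s T')
  | cancel {X Y Z : Proc} {d θ} (s : Step d X θ Y) (s' : Step (!d) Y θ X)
      (T : Trace X Z) :
      CEq (Trace.cons d θ s (Trace.cons (!d) θ s' T)) T
  | square {X X₁ X₂ Y Z : Proc} {d₁ d₂ θ₁ θ₂}
      (s₁ : Step d₁ X θ₁ X₁) (t₂ : Step d₂ X₁ θ₂ Y)
      (s₂ : Step d₂ X θ₂ X₂) (t₁ : Step d₁ X₂ θ₁ Y)
      (hc : Conc θ₁ θ₂) (T : Trace Y Z) :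
      CEq (Trace.cons d₁ θ₁ s₁ (Trace.cons d₂ θ₂ t₂ T))
          (Trace.cons d₂ θ₂ s₂ (Trace.cons d₁ θ₁ t₁ T))

/-- Removal of the keyed prefix α[k]. -/
def remP (a : Lab) (k : Key) : Proc → Proc
  | .nil => .nil
  | .pre b X => .pre b X
  | .kpre b m X => if b = a ∧ m = k then X else .kpre b m (remP a k X)
  | .par X Y => .par (remP a k X) (remP a k Y)
  | .sum X Y => .sum (remP a k X) (remP a k Y)
  | .res X n => .res (remP a k X) n
  | .repl X => .repl (remP a k X)

/-- rem_k^α : remove α[k] and its complement (only α[k] when α = τ). -/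
def remK (a : Lab) (k : Key) (X : Proc) : Proc :=
  if a = Lab.tau then remP a k X else remP a k (remP a.co k X)

/-- Left projection of enhanced keyed labels (partial). -/
def projL : ELab → Option ELab
  | .parL θ => some θ
  | .syn (.parL θL) _ => some θL
  | _ => none

/-- Right projection of enhanced keyed labels (partial). -/
def projR : ELab → Option ELab
  | .parR θ => some θ
  | .syn _ (.parR θR) => some θR
  | _ => none

/-- Projection selector: `true` is left, `false` is right. -/
def eproj : Bool → ELab → Option ELab
  | true => projL
  | false => projR

/-- Component selector for parallel processes. -/
def side (b : Bool) (L R : Proc) : Proc := if b then L else R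

/-- Labels of the shapes arising from a parallel composition. -/
def ParShape (θ : ELab) : Prop :=
  (∃ φ, θ = ELab.parL φ) ∨ (∃ φ, θ = ELab.parR φ) ∨
    ∃ φ ψ, θ = ELab.syn (ELab.parL φ) (ELab.parR ψ)

/-- The collapsing function σ identifying ! and |_R prefixes. -/
def collapse : ELab → ELab
  | .base a k => .base a k
  | .parL θ => .parL (collapse θ)
  | .parR θ => .parR (collapse θ)
  | .bang θ => .parR (collapse θ)
  | .syn θ₁ θ₂ => .syn (collapse θ₁) (collapse θ₂)

/-- Sub-term relation: strips sums, restrictions and executed keyed prefixes.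
`Strip X Y` means X is a sub-term of Y. -/
inductive Strip : Proc → Proc → Prop
  | refl (X : Proc) : Strip X X
  | sumL {X Y Z : Proc} : Strip X Y → Strip X (Y.sum Z)
  | sumR {X Y Z : Proc} : Strip X Y → Strip X (Z.sum Y)
  | res {X Y : Proc} {a : ℕ} : Strip X Y → Strip X (Y.res a)
  | kpre {X Y : Proc} {a : Lab} {k : Key} : Strip X Y → Strip X (.kpre a k Y)

/-- A forward transition of the proved LTS, as an object. -/
structure FTrans where
  src : Proc
  lab : ELab
  tgt : Proc
  ok : Fwd src lab tgt

/-- A backward transition of the proved LTS, as an object. -/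
structure BTrans where
  src : Proc
  lab : ELab
  tgt : Proc
  ok : Bwd src lab tgt

end CCSK

namespace CCSK

/-! ### Basic lemmas: loop lemma, keys, keyed multisets, leaves -/

/-- Base leaves of an enhanced keyed label. -/
def ELab.leaves : ELab → Multiset (Lab × Key)
  | .base a k => {(a, k)}
  | .parL θ => θ.leaves
  | .parR θ => θ.leaves
  | .bang θ => θ.leaves
  | .syn θ₁ θ₂ => θ₁.leaves + θ₂.leaves

theorem fwd_bwd {X θ Y} (h : Fwd X θ Y) : Bwd Y θ X := by
  induction h with
  | act h => exact .act h
  | pre h hk ih => exact .pre ih hk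
  | res h h1 h2 ih => exact .res ih h1 h2
  | parL h hk ih => exact .parL ih hk
  | parR h hk ih => exact .parR ih hk
  | syn h1 h2 ht hc hk ih1 ih2 => exact .syn ih1 ih2 ht hc hk
  | sumL h hs ih => exact .sumL ih hs
  | sumR h hs ih => exact .sumR ih hs

theorem bwd_fwd {X θ Y} (h : Bwd X θ Y) : Fwd Y θ X := by
  induction h with
  | act h => exact .act h
  | pre h hk ih => exact .pre ih hk
  | res h h1 h2 ih => exact .res ih h1 h2
  | parL h hk ih => exact .parL ih hk
  | parR h hk ih => exact .parR ih hk
  | syn h1 h2 ht hc hk ih1 ih2 => exact .syn ih1 ih2 ht hc hk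
  | sumL h hs ih => exact .sumL ih hs
  | sumR h hs ih => exact .sumR ih hs

theorem bwd_key_mem {X θ Y} (h : Bwd X θ Y) : θ.key ∈ X.keys := by
  induction h with
  | act h => exact Set.mem_insert _ _
  | pre h hk ih => exact Set.mem_insert_iff.mpr (Or.inr ih)
  | res h h1 h2 ih => exact ih
  | parL h hk ih => exact Set.mem_union_left _ ih
  | parR h hk ih => exact Set.mem_union_right _ ih
  | syn h1 h2 ht hc hk ih1 ih2 => exact Set.mem_union_left _ ih1
  | sumL h hs ih => exact Set.mem_union_left _ ih
  | sumR h hs ih => exact Set.mem_union_right _ ih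

theorem std_no_bwd {X θ Y} (hs : X.std) (h : Bwd X θ Y) : False := by
  have := bwd_key_mem h
  rw [Proc.std] at hs
  rw [hs] at this
  exact Set.notMem_empty _ this

theorem fwd_key_mem_tgt {X θ Y} (h : Fwd X θ Y) : θ.key ∈ Y.keys :=
  bwd_key_mem (fwd_bwd h)

theorem fwd_keys_sub {X θ Y} (h : Fwd X θ Y) : X.keys ⊆ Y.keys := by
  induction h with
  | act h =>
      intro m hm
      simp only [Proc.keys] at hm ⊢
      exact Or.inr hm
  | pre h hk ih => exact Set.insert_subset_insert ih
  | res h h1 h2 ih => exact ih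
  | parL h hk ih => exact Set.union_subset_union ih le_rfl
  | parR h hk ih => exact Set.union_subset_union le_rfl ih
  | syn h1 h2 ht hc hk ih1 ih2 => exact Set.union_subset_union ih1 ih2
  | sumL h hs ih => exact Set.union_subset_union ih le_rfl
  | sumR h hs ih => exact Set.union_subset_union le_rfl ih

theorem bwd_keys_sub {X θ Y} (h : Bwd X θ Y) : Y.keys ⊆ X.keys :=
  fwd_keys_sub (bwd_fwd h)

theorem fwd_fresh {X θ Y} (h : Fwd X θ Y) : θ.key ∉ X.keys := by
  induction h with
  | act h =>
      rw [Proc.std] at h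
      simp only [Proc.keys, h]
      exact Set.notMem_empty _
  | pre h hk ih =>
      simp only [Proc.keys, Set.mem_insert_iff]
      rintro (h1 | h2)
      · exact hk h1
      · exact ih h2
  | res h h1 h2 ih => exact ih
  | parL h hk ih =>
      simp only [Proc.keys, ELab.key, Set.mem_union]
      rintro (h1 | h2)
      · exact ih h1
      · exact hk h2
  | parR h hk ih =>
      simp only [Proc.keys, ELab.key, Set.mem_union]
      rintro (h1 | h2)
      · exact hk h1
      · exact ih h2
  | @syn X X' Y Y' θ₁ θ₂ h1 h2 ht hc hk ih1 ih2 =>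
      simp only [Proc.keys, ELab.key, Set.mem_union]
      rintro (hm | hm)
      · exact ih1 hm
      · exact ih2 (hk ▸ hm)
  | sumL h hs ih =>
      simp only [Proc.keys, Set.mem_union]
      rintro (h1 | h2)
      · exact ih h1
      · rw [Proc.std] at hs; rw [hs] at h2; exact Set.notMem_empty _ h2
  | sumR h hs ih =>
      simp only [Proc.keys, Set.mem_union]
      rintro (hm | hm)
      · rw [Proc.std] at hs; rw [hs] at hm; exact Set.notMem_empty _ hm
      · exact ih hm

theorem fwd_keyed {X θ Y} (h : Fwd X θ Y) : Y.keyed = X.keyed + θ.leaves := by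
  induction h with
  | act h =>
      simp only [Proc.keyed, ELab.leaves]
      rw [add_comm, Multiset.singleton_add]
  | pre h hk ih => simp only [Proc.keyed, ELab.leaves, ih]; rw [Multiset.cons_add]
  | res h h1 h2 ih => exact ih
  | parL h hk ih =>
      simp only [Proc.keyed, ELab.leaves, ih]
      rw [add_right_comm]
  | parR h hk ih =>
      simp only [Proc.keyed, ELab.leaves, ih]
      rw [add_assoc]
  | syn h1 h2 ht hc hk ih1 ih2 =>
      simp only [Proc.keyed, ELab.leaves, ih1, ih2]
      rw [add_add_add_comm]
  | sumL h hs ih => simp only [Proc.keyed, ih]; rw [add_right_comm]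
  | sumR h hs ih => simp only [Proc.keyed, ih]; rw [add_assoc]

theorem bwd_keyed {X θ Y} (h : Bwd X θ Y) : X.keyed = Y.keyed + θ.leaves :=
  fwd_keyed (bwd_fwd h)

theorem fwd_leaves_ne {X θ Y} (h : Fwd X θ Y) : θ.leaves ≠ 0 := by
  induction h with
  | act h => simp [ELab.leaves]
  | pre h hk ih => exact ih
  | res h h1 h2 ih => exact ih
  | parL h hk ih => exact ih
  | parR h hk ih => exact ih
  | syn h1 h2 ht hc hk ih1 ih2 =>
      intro hz
      simp only [ELab.leaves] at hz
      exact ih1 (Multiset.le_zero.mp (hz ▸ Multiset.le_add_right _ _))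
  | sumL h hs ih => exact ih
  | sumR h hs ih => exact ih

theorem bwd_leaves_ne {X θ Y} (h : Bwd X θ Y) : θ.leaves ≠ 0 :=
  fwd_leaves_ne (bwd_fwd h)

theorem fwd_leaves_key {X θ Y} (h : Fwd X θ Y) :
    ∀ p ∈ θ.leaves, p.2 = θ.key := by
  induction h with
  | act h => intro p hp; simp [ELab.leaves] at hp; simp [hp, ELab.key]
  | pre h hk ih => exact ih
  | res h h1 h2 ih => exact ih
  | parL h hk ih => exact ih
  | parR h hk ih => exact ih
  | syn h1 h2 ht hc hk ih1 ih2 =>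
      intro p hp
      simp only [ELab.leaves, Multiset.mem_add] at hp
      simp only [ELab.key]
      rcases hp with hp | hp
      · exact ih1 p hp
      · exact (ih2 p hp).trans hk
  | sumL h hs ih => exact ih
  | sumR h hs ih => exact ih

theorem bwd_leaves_key {X θ Y} (h : Bwd X θ Y) :
    ∀ p ∈ θ.leaves, p.2 = θ.key :=
  fwd_leaves_key (bwd_fwd h)

theorem bwd_card_lt {X θ Y} (h : Bwd X θ Y) :
    Multiset.card Y.keyed < Multiset.card X.keyed := by
  have hk := bwd_keyed h
  have hl := bwd_leaves_ne h
  rw [hk, Multiset.card_add]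
  have : 0 < Multiset.card θ.leaves := Multiset.card_pos.mpr hl
  omega

/-! ### Dependency and concurrency helper lemmas -/

theorem dep_refl : ∀ θ : ELab, Dep θ θ := by
  intro θ
  induction θ with
  | base a k => exact .base a k _
  | parL θ ih => exact .parL ih
  | parR θ ih => exact .parR ih
  | bang θ ih => exact .bangBang θ
  | syn θ₁ θ₂ ih1 ih2 => exact .synSynL ih1

theorem dep_parL_parL {a b : ELab} (h : Dep (.parL a) (.parL b)) : Dep a b := by
  cases h; assumption

theorem dep_parR_parR {a b : ELab} (h : Dep (.parR a) (.parR b)) : Dep a b := by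
  cases h; assumption

theorem not_dep_parL_parR {a b : ELab} (h : Dep (.parL a) (.parR b)) : False := by
  cases h

theorem not_dep_parR_parL {a b : ELab} (h : Dep (.parR a) (.parL b)) : False := by
  cases h

theorem dep_parL_syn {a b c : ELab} (h : Dep (.parL a) (.syn (.parL b) (.parR c))) :
    Dep a b := by
  cases h with
  | synTgtL h => exact dep_parL_parL h
  | synTgtR h => exact absurd h not_dep_parL_parR

theorem dep_parR_syn {a b c : ELab} (h : Dep (.parR a) (.syn (.parL b) (.parR c))) :
    Dep a c := by
  cases h with
  | synTgtL h => exact absurd h not_dep_parR_parL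
  | synTgtR h => exact dep_parR_parR h

theorem dep_syn_parL {a b c : ELab} (h : Dep (.syn (.parL a) (.parR b)) (.parL c)) :
    Dep a c := by
  cases h with
  | synSrcL h => exact dep_parL_parL h
  | synSrcR h => exact absurd h not_dep_parR_parL

theorem dep_syn_parR {a b c : ELab} (h : Dep (.syn (.parL a) (.parR b)) (.parR c)) :
    Dep b c := by
  cases h with
  | synSrcL h => exact absurd h not_dep_parL_parR
  | synSrcR h => exact dep_parR_parR h

theorem dep_syn_syn {a b c d : ELab}
    (h : Dep (.syn (.parL a) (.parR b)) (.syn (.parL c) (.parR d))) :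
    Dep a c ∨ Dep b d := by
  cases h with
  | synSrcL h => exact Or.inl (dep_parL_syn h)
  | synSrcR h => exact Or.inr (dep_parR_syn h)
  | synTgtL h => exact Or.inl (dep_syn_parL h)
  | synTgtR h => exact Or.inr (dep_syn_parR h)
  | synSynL h => exact Or.inl (dep_parL_parL h)
  | synSynR h => exact Or.inr (dep_parR_parR h)

theorem Conc.symm' {θ₁ θ₂ : ELab} (h : Conc θ₁ θ₂) : Conc θ₂ θ₁ := ⟨h.2, h.1⟩

theorem conc_parL {a b : ELab} (h : Conc a b) : Conc (.parL a) (.parL b) :=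
  ⟨fun hd => h.1 (dep_parL_parL hd), fun hd => h.2 (dep_parL_parL hd)⟩

theorem conc_parR {a b : ELab} (h : Conc a b) : Conc (.parR a) (.parR b) :=
  ⟨fun hd => h.1 (dep_parR_parR hd), fun hd => h.2 (dep_parR_parR hd)⟩

theorem conc_parL_parR {a b : ELab} : Conc (.parL a) (.parR b) :=
  ⟨not_dep_parL_parR, not_dep_parR_parL⟩

theorem conc_parR_parL {a b : ELab} : Conc (.parR a) (.parL b) :=
  ⟨not_dep_parR_parL, not_dep_parL_parR⟩

theorem conc_parL_syn {a b c : ELab} (h : Conc a b) :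
    Conc (.parL a) (.syn (.parL b) (.parR c)) :=
  ⟨fun hd => h.1 (dep_parL_syn hd), fun hd => h.2 (dep_syn_parL hd)⟩

theorem conc_syn_parL {a b c : ELab} (h : Conc a c) :
    Conc (.syn (.parL a) (.parR b)) (.parL c) :=
  ⟨fun hd => h.1 (dep_syn_parL hd), fun hd => h.2 (dep_parL_syn hd)⟩

theorem conc_parR_syn {a b c : ELab} (h : Conc a c) :
    Conc (.parR a) (.syn (.parL b) (.parR c)) :=
  ⟨fun hd => h.1 (dep_parR_syn hd), fun hd => h.2 (dep_syn_parR hd)⟩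

theorem conc_syn_parR {a b c : ELab} (h : Conc b c) :
    Conc (.syn (.parL a) (.parR b)) (.parR c) :=
  ⟨fun hd => h.1 (dep_syn_parR hd), fun hd => h.2 (dep_parR_syn hd)⟩

theorem conc_syn_syn {a b c d : ELab} (h1 : Conc a c) (h2 : Conc b d) :
    Conc (.syn (.parL a) (.parR b)) (.syn (.parL c) (.parR d)) := by
  constructor
  · intro hd
    rcases dep_syn_syn hd with hd | hd
    · exact h1.1 hd
    · exact h2.1 hd
  · intro hd
    rcases dep_syn_syn hd with hd | hd
    · exact h1.2 hd
    · exact h2.2 hd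

/-! ### Backward determinism by key -/

theorem bdet {X θ₁ X₁} (h₁ : Bwd X θ₁ X₁) :
    ∀ {θ₂ X₂}, Bwd X θ₂ X₂ → θ₁.key = θ₂.key → θ₁ = θ₂ ∧ X₁ = X₂ := by
  induction h₁ with
  | act hstd =>
      intro θ₂ X₂ h₂ hk
      cases h₂ with
      | act h => exact ⟨rfl, rfl⟩
      | pre h hk' => exact absurd h (std_no_bwd hstd)
  | @pre a k P P₁ φ h hk ih =>
      intro θ₂ X₂ h₂ hkey
      cases h₂ with
      | act hs => exact absurd h (std_no_bwd hs)
      | pre h₂' hk₂ =>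
          obtain ⟨rfl, rfl⟩ := ih h₂' hkey
          exact ⟨rfl, rfl⟩
  | res h hn1 hn2 ih =>
      intro θ₂ X₂ h₂ hkey
      cases h₂ with
      | res h₂' m1 m2 =>
          obtain ⟨rfl, rfl⟩ := ih h₂' hkey
          exact ⟨rfl, rfl⟩
  | @parL A A₁ B φ h hk ih =>
      intro θ₂ X₂ h₂ hkey
      cases h₂ with
      | parL h₂' hk₂ =>
          simp only [ELab.key] at hkey
          obtain ⟨rfl, rfl⟩ := ih h₂' hkey
          exact ⟨rfl, rfl⟩
      | parR h₂' hk₂ =>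
          simp only [ELab.key] at hkey
          exact absurd (hkey ▸ bwd_key_mem h₂') hk
      | @syn _ _ _ _ ψ₁ ψ₂ h₂' h₃' ht hc hkk =>
          simp only [ELab.key] at hkey
          exact absurd ((hkk.trans hkey.symm) ▸ bwd_key_mem h₃') hk
  | @parR B B₁ A φ h hk ih =>
      intro θ₂ X₂ h₂ hkey
      cases h₂ with
      | parL h₂' hk₂ =>
          simp only [ELab.key] at hkey
          exact absurd (hkey ▸ bwd_key_mem h₂') hk
      | parR h₂' hk₂ =>
          simp only [ELab.key] at hkey
          obtain ⟨rfl, rfl⟩ := ih h₂' hkey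
          exact ⟨rfl, rfl⟩
      | @syn _ _ _ _ ψ₁ ψ₂ h₂' h₃' ht hc hkk =>
          simp only [ELab.key] at hkey
          exact absurd (hkey ▸ bwd_key_mem h₂') hk
  | @syn A' A B' B φ₁ φ₂ hA hB ht hc hkk ihA ihB =>
      intro θ₂ X₂ h₂ hkey
      cases h₂ with
      | parL h₂' hk₂ =>
          simp only [ELab.key] at hkey
          exact absurd ((hkk.trans hkey) ▸ bwd_key_mem hB) hk₂
      | parR h₂' hk₂ =>
          simp only [ELab.key] at hkey
          exact absurd (hkey ▸ bwd_key_mem hA) hk₂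
      | @syn _ _ _ _ ψ₁ ψ₂ h₂' h₃' ht' hc' hkk' =>
          simp only [ELab.key] at hkey
          obtain ⟨rfl, rfl⟩ := ihA h₂' hkey
          obtain ⟨rfl, rfl⟩ := ihB h₃' (hkk.trans (hkey.trans hkk'.symm))
          exact ⟨rfl, rfl⟩
  | sumL h hstd ih =>
      intro θ₂ X₂ h₂ hkey
      cases h₂ with
      | sumL h₂' hs =>
          obtain ⟨rfl, rfl⟩ := ih h₂' hkey
          exact ⟨rfl, rfl⟩
      | sumR h₂' hs => exact absurd h (std_no_bwd hs)
  | sumR h hstd ih =>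
      intro θ₂ X₂ h₂ hkey
      cases h₂ with
      | sumL h₂' hs => exact absurd h (std_no_bwd hs)
      | sumR h₂' hs =>
          obtain ⟨rfl, rfl⟩ := ih h₂' hkey
          exact ⟨rfl, rfl⟩

theorem fwd_tgt_nonstd {X θ Y} (h : Fwd X θ Y) (hs : Y.std) : False := by
  have := fwd_key_mem_tgt h
  rw [Proc.std] at hs
  rw [hs] at this
  exact Set.notMem_empty _ this

/-! ### Square property for coinitial backward transitions -/

theorem bbsq {X θ₁ X₁} (h₁ : Bwd X θ₁ X₁) :
    ∀ {θ₂ X₂}, Bwd X θ₂ X₂ → θ₁.key ≠ θ₂.key →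
      Conc θ₁ θ₂ ∧ ∃ Z, Bwd X₁ θ₂ Z ∧ Bwd X₂ θ₁ Z := by
  induction h₁ with
  | act hstd =>
      intro θ₂ X₂ h₂ hne
      cases h₂ with
      | act h => simp [ELab.key] at hne
      | pre h hk' => exact absurd h (std_no_bwd hstd)
  | @pre a k P P₁ φ h hk ih =>
      intro θ₂ X₂ h₂ hne
      cases h₂ with
      | act hs => exact absurd h (std_no_bwd hs)
      | pre h₂' hk₂ =>
          obtain ⟨c, Z, z₁, z₂⟩ := ih h₂' hne
          exact ⟨c, Proc.kpre a k Z, .pre z₁ hk₂, .pre z₂ hk⟩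
  | @res P P₁ φ a h hn1 hn2 ih =>
      intro θ₂ X₂ h₂ hne
      cases h₂ with
      | res h₂' m1 m2 =>
          obtain ⟨c, Z, z₁, z₂⟩ := ih h₂' hne
          exact ⟨c, Z.res a, .res z₁ m1 m2, .res z₂ hn1 hn2⟩
  | @parL A A₁ B φ h hk ih =>
      intro θ₂ X₂ h₂ hne
      cases h₂ with
      | @parL _ A₂ _ ψ h₂' hk₂ =>
          simp only [ELab.key, ne_eq] at hne
          obtain ⟨c, Z, z₁, z₂⟩ := ih h₂' hne
          exact ⟨conc_parL c, Z.par B, .parL z₁ hk₂, .parL z₂ hk⟩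
      | @parR _ B₂ _ ψ h₂' hk₂ =>
          exact ⟨conc_parL_parR, A₁.par B₂,
            .parR h₂' (fun m => hk₂ (bwd_keys_sub h m)),
            .parL h (fun m => hk (bwd_keys_sub h₂' m))⟩
      | @syn _ A₂ _ B₂ ψ₁ ψ₂ h₂' h₃' ht hc hkk =>
          simp only [ELab.key, ne_eq] at hne
          obtain ⟨c, Z, z₁, z₂⟩ := ih h₂' hne
          exact ⟨conc_parL_syn c, Z.par B₂,
            .syn z₁ h₃' ht hc hkk,
            .parL z₂ (fun m => hk (bwd_keys_sub h₃' m))⟩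
  | @parR B B₁ A φ h hk ih =>
      intro θ₂ X₂ h₂ hne
      cases h₂ with
      | @parL _ A₂ _ ψ h₂' hk₂ =>
          exact ⟨conc_parR_parL, A₂.par B₁,
            .parL h₂' (fun m => hk₂ (bwd_keys_sub h m)),
            .parR h (fun m => hk (bwd_keys_sub h₂' m))⟩
      | @parR _ B₂ _ ψ h₂' hk₂ =>
          simp only [ELab.key, ne_eq] at hne
          obtain ⟨c, Z, z₁, z₂⟩ := ih h₂' hne
          exact ⟨conc_parR c, A.par Z, .parR z₁ hk₂, .parR z₂ hk⟩
      | @syn _ A₂ _ B₂ ψ₁ ψ₂ h₂' h₃' ht hc hkk =>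
          simp only [ELab.key, ne_eq] at hne
          have hne' : φ.key ≠ ψ₂.key := by rw [hkk]; exact hne
          obtain ⟨c, Z, z₁, z₂⟩ := ih h₃' hne'
          exact ⟨conc_parR_syn c, A₂.par Z,
            .syn h₂' z₁ ht hc hkk,
            .parR z₂ (fun m => hk (bwd_keys_sub h₂' m))⟩
  | @syn A' A B' B φ₁ φ₂ hA hB ht hc hkk ihA ihB =>
      intro θ₂ X₂ h₂ hne
      cases h₂ with
      | @parL _ A₂ _ ψ h₂' hk₂ =>
          simp only [ELab.key, ne_eq] at hne
          obtain ⟨c, Z, z₁, z₂⟩ := ihA h₂' hne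
          exact ⟨conc_syn_parL c, Z.par B,
            .parL z₁ (fun m => hk₂ (bwd_keys_sub hB m)),
            .syn z₂ hB ht hc hkk⟩
      | @parR _ B₂ _ ψ h₂' hk₂ =>
          simp only [ELab.key, ne_eq] at hne
          have hne' : φ₂.key ≠ ψ.key := by rw [hkk]; exact hne
          obtain ⟨c, Z, z₁, z₂⟩ := ihB h₂' hne'
          exact ⟨conc_syn_parR c, A.par Z,
            .parR z₁ (fun m => hk₂ (bwd_keys_sub hA m)),
            .syn hA z₂ ht hc hkk⟩
      | @syn _ A₂ _ B₂ ψ₁ ψ₂ h₂' h₃' ht' hc' hkk' =>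
          simp only [ELab.key, ne_eq] at hne
          have hneR : φ₂.key ≠ ψ₂.key := by rw [hkk, hkk']; exact hne
          obtain ⟨cA, ZA, zA₁, zA₂⟩ := ihA h₂' hne
          obtain ⟨cB, ZB, zB₁, zB₂⟩ := ihB h₃' hneR
          exact ⟨conc_syn_syn cA cB, ZA.par ZB,
            .syn zA₁ zB₁ ht' hc' hkk',
            .syn zA₂ zB₂ ht hc hkk⟩
  | @sumL A' A φ B h hstd ih =>
      intro θ₂ X₂ h₂ hne
      cases h₂ with
      | sumL h₂' hs =>
          obtain ⟨c, Z, z₁, z₂⟩ := ih h₂' hne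
          exact ⟨c, Z.sum B, .sumL z₁ hstd, .sumL z₂ hstd⟩
      | sumR h₂' hs => exact absurd h (std_no_bwd hs)
  | @sumR B' B φ A h hstd ih =>
      intro θ₂ X₂ h₂ hne
      cases h₂ with
      | sumL h₂' hs => exact absurd h (std_no_bwd hs)
      | sumR h₂' hs =>
          obtain ⟨c, Z, z₁, z₂⟩ := ih h₂' hne
          exact ⟨c, A.sum Z, .sumR z₁ hstd, .sumR z₂ hstd⟩

/-! ### A forward step followed by a backward step with the same key is undone -/

theorem rev_uniq {X θ₁ X₁} (h₁ : Fwd X θ₁ X₁) :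
    ∀ {θ₂ Y}, Bwd X₁ θ₂ Y → θ₂.key = θ₁.key → θ₂ = θ₁ ∧ Y = X := by
  induction h₁ with
  | @act a k P hstd =>
      intro θ₂ Y h₂ hkey
      cases h₂ with
      | act h => exact ⟨rfl, rfl⟩
      | pre h hk' => exact absurd h (std_no_bwd hstd)
  | @pre a k P P' φ h hk ih =>
      intro θ₂ Y h₂ hkey
      cases h₂ with
      | act hs => exact absurd hs (fun hs => fwd_tgt_nonstd h hs)
      | pre h₂' hk₂ =>
          obtain ⟨rfl, rfl⟩ := ih h₂' hkey
          exact ⟨rfl, rfl⟩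
  | res h hn1 hn2 ih =>
      intro θ₂ Y h₂ hkey
      cases h₂ with
      | res h₂' m1 m2 =>
          obtain ⟨rfl, rfl⟩ := ih h₂' hkey
          exact ⟨rfl, rfl⟩
  | @parL A A₁ B φ h hk ih =>
      intro θ₂ Y h₂ hkey
      cases h₂ with
      | @parL _ A₂ _ ψ h₂' hk₂ =>
          simp only [ELab.key] at hkey
          obtain ⟨rfl, rfl⟩ := ih h₂' hkey
          exact ⟨rfl, rfl⟩
      | @parR _ B₂ _ ψ h₂' hk₂ =>
          simp only [ELab.key] at hkey
          exact absurd (hkey ▸ bwd_key_mem h₂') hk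
      | @syn _ A₂ _ B₂ ψ₁ ψ₂ h₂' h₃' ht hc hkk =>
          simp only [ELab.key] at hkey
          exact absurd ((hkk.trans hkey) ▸ bwd_key_mem h₃') hk
  | @parR B B₁ A φ h hk ih =>
      intro θ₂ Y h₂ hkey
      cases h₂ with
      | @parL _ A₂ _ ψ h₂' hk₂ =>
          simp only [ELab.key] at hkey
          exact absurd (hkey ▸ bwd_key_mem h₂') hk
      | @parR _ B₂ _ ψ h₂' hk₂ =>
          simp only [ELab.key] at hkey
          obtain ⟨rfl, rfl⟩ := ih h₂' hkey
          exact ⟨rfl, rfl⟩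
      | @syn _ A₂ _ B₂ ψ₁ ψ₂ h₂' h₃' ht hc hkk =>
          simp only [ELab.key] at hkey
          exact absurd (hkey ▸ bwd_key_mem h₂') hk
  | @syn A A₁ B B₁ φ₁ φ₂ hA hB ht hc hkk ihA ihB =>
      intro θ₂ Y h₂ hkey
      cases h₂ with
      | @parL _ A₂ _ ψ h₂' hk₂ =>
          simp only [ELab.key] at hkey
          exact absurd ((hkey.trans hkk.symm) ▸ fwd_key_mem_tgt hB) hk₂
      | @parR _ B₂ _ ψ h₂' hk₂ =>
          simp only [ELab.key] at hkey
          exact absurd (hkey ▸ fwd_key_mem_tgt hA) hk₂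
      | @syn _ A₂ _ B₂ ψ₁ ψ₂ h₂' h₃' ht' hc' hkk' =>
          simp only [ELab.key] at hkey
          obtain ⟨rfl, rfl⟩ := ihA h₂' hkey
          obtain ⟨rfl, rfl⟩ := ihB h₃' (hkk'.trans (hkey.trans hkk.symm))
          exact ⟨rfl, rfl⟩
  | @sumL A A₁ φ B h hstd ih =>
      intro θ₂ Y h₂ hkey
      cases h₂ with
      | sumL h₂' hs =>
          obtain ⟨rfl, rfl⟩ := ih h₂' hkey
          exact ⟨rfl, rfl⟩
      | sumR h₂' hs => exact absurd hs (fun hs => fwd_tgt_nonstd h hs)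
  | @sumR B B₁ φ A h hstd ih =>
      intro θ₂ Y h₂ hkey
      cases h₂ with
      | sumL h₂' hs => exact absurd hs (fun hs => fwd_tgt_nonstd h hs)
      | sumR h₂' hs =>
          obtain ⟨rfl, rfl⟩ := ih h₂' hkey
          exact ⟨rfl, rfl⟩

/-! ### Square property for a forward step followed by an independent backward step -/

theorem fbsq {X θ₁ X₁} (h₁ : Fwd X θ₁ X₁) :
    ∀ {θ₂ Y}, Bwd X₁ θ₂ Y → θ₂.key ≠ θ₁.key →
      Conc θ₁ θ₂ ∧ ∃ Z, Bwd X θ₂ Z ∧ Fwd Z θ₁ Y := by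
  induction h₁ with
  | @act a k P hstd =>
      intro θ₂ Y h₂ hne
      cases h₂ with
      | act h => simp [ELab.key] at hne
      | pre h hk' => exact absurd h (std_no_bwd hstd)
  | @pre a k P P' φ h hk ih =>
      intro θ₂ Y h₂ hne
      cases h₂ with
      | act hs => exact absurd hs (fun hs => fwd_tgt_nonstd h hs)
      | pre h₂' hk₂ =>
          obtain ⟨c, Z, z₁, z₂⟩ := ih h₂' hne
          exact ⟨c, Proc.kpre a k Z, .pre z₁ hk₂, .pre z₂ hk⟩
  | @res P P' φ a h hn1 hn2 ih =>
      intro θ₂ Y h₂ hne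
      cases h₂ with
      | res h₂' m1 m2 =>
          obtain ⟨c, Z, z₁, z₂⟩ := ih h₂' hne
          exact ⟨c, Z.res a, .res z₁ m1 m2, .res z₂ hn1 hn2⟩
  | @parL A A₁ B φ h hk ih =>
      intro θ₂ Y h₂ hne
      cases h₂ with
      | @parL _ A₂ _ ψ h₂' hk₂ =>
          simp only [ELab.key, ne_eq] at hne
          obtain ⟨c, Z, z₁, z₂⟩ := ih h₂' hne
          exact ⟨conc_parL c, Z.par B, .parL z₁ hk₂, .parL z₂ hk⟩
      | @parR _ B₂ _ ψ h₂' hk₂ =>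
          exact ⟨conc_parL_parR, A.par B₂,
            .parR h₂' (fun m => hk₂ (fwd_keys_sub h m)),
            .parL h (fun m => hk (bwd_keys_sub h₂' m))⟩
      | @syn _ A₂ _ B₂ ψ₁ ψ₂ h₂' h₃' ht hc hkk =>
          simp only [ELab.key, ne_eq] at hne
          obtain ⟨c, Z, z₁, z₂⟩ := ih h₂' hne
          exact ⟨conc_parL_syn c, Z.par B₂,
            .syn z₁ h₃' ht hc hkk,
            .parL z₂ (fun m => hk (bwd_keys_sub h₃' m))⟩
  | @parR B B₁ A φ h hk ih =>
      intro θ₂ Y h₂ hne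
      cases h₂ with
      | @parL _ A₂ _ ψ h₂' hk₂ =>
          exact ⟨conc_parR_parL, A₂.par B,
            .parL h₂' (fun m => hk₂ (fwd_keys_sub h m)),
            .parR h (fun m => hk (bwd_keys_sub h₂' m))⟩
      | @parR _ B₂ _ ψ h₂' hk₂ =>
          simp only [ELab.key, ne_eq] at hne
          obtain ⟨c, Z, z₁, z₂⟩ := ih h₂' hne
          exact ⟨conc_parR c, A.par Z, .parR z₁ hk₂, .parR z₂ hk⟩
      | @syn _ A₂ _ B₂ ψ₁ ψ₂ h₂' h₃' ht hc hkk =>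
          simp only [ELab.key, ne_eq] at hne
          have hne' : ψ₂.key ≠ φ.key := by rw [hkk]; exact hne
          obtain ⟨c, Z, z₁, z₂⟩ := ih h₃' hne'
          exact ⟨conc_parR_syn c, A₂.par Z,
            .syn h₂' z₁ ht hc hkk,
            .parR z₂ (fun m => hk (bwd_keys_sub h₂' m))⟩
  | @syn A A₁ B B₁ φ₁ φ₂ hA hB ht hc hkk ihA ihB =>
      intro θ₂ Y h₂ hne
      cases h₂ with
      | @parL _ A₂ _ ψ h₂' hk₂ =>
          simp only [ELab.key, ne_eq] at hne
          obtain ⟨c, Z, z₁, z₂⟩ := ihA h₂' hne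
          exact ⟨conc_syn_parL c, Z.par B,
            .parL z₁ (fun m => hk₂ (fwd_keys_sub hB m)),
            .syn z₂ hB ht hc hkk⟩
      | @parR _ B₂ _ ψ h₂' hk₂ =>
          simp only [ELab.key, ne_eq] at hne
          have hne' : ψ.key ≠ φ₂.key := by rw [hkk]; exact hne
          obtain ⟨c, Z, z₁, z₂⟩ := ihB h₂' hne'
          exact ⟨conc_syn_parR c, A.par Z,
            .parR z₁ (fun m => hk₂ (fwd_keys_sub hA m)),
            .syn hA z₂ ht hc hkk⟩
      | @syn _ A₂ _ B₂ ψ₁ ψ₂ h₂' h₃' ht' hc' hkk' =>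
          simp only [ELab.key, ne_eq] at hne
          have hneR : ψ₂.key ≠ φ₂.key := by rw [hkk, hkk']; exact hne
          obtain ⟨cA, ZA, zA₁, zA₂⟩ := ihA h₂' hne
          obtain ⟨cB, ZB, zB₁, zB₂⟩ := ihB h₃' hneR
          exact ⟨conc_syn_syn cA cB, ZA.par ZB,
            .syn zA₁ zB₁ ht' hc' hkk',
            .syn zA₂ zB₂ ht hc hkk⟩
  | @sumL A A₁ φ B h hstd ih =>
      intro θ₂ Y h₂ hne
      cases h₂ with
      | sumL h₂' hs =>
          obtain ⟨c, Z, z₁, z₂⟩ := ih h₂' hne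
          exact ⟨c, Z.sum B, .sumL z₁ hstd, .sumL z₂ hstd⟩
      | sumR h₂' hs => exact absurd hs (fun hs => fwd_tgt_nonstd h hs)
  | @sumR B B₁ φ A h hstd ih =>
      intro θ₂ Y h₂ hne
      cases h₂ with
      | sumL h₂' hs => exact absurd hs (fun hs => fwd_tgt_nonstd h hs)
      | sumR h₂' hs =>
          obtain ⟨c, Z, z₁, z₂⟩ := ih h₂' hne
          exact ⟨c, A.sum Z, .sumR z₁ hstd, .sumR z₂ hstd⟩

/-! ### Trace infrastructure -/

def stepRev {d X θ Y} (s : Step d X θ Y) : Step (!d) Y θ X := by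
  cases d
  · exact bwd_fwd s
  · exact fwd_bwd s

def Trace.rev : {X Y : Proc} → Trace X Y → Trace Y X
  | _, _, .nil X => .nil X
  | _, _, .cons d θ s T => (Trace.rev T).comp (.cons (!d) θ (stepRev s) (.nil _))

theorem Trace.comp_nil : ∀ {X Y} (T : Trace X Y), T.comp (.nil Y) = T
  | _, _, .nil X => rfl
  | _, _, .cons d θ s T => by rw [Trace.comp, Trace.comp_nil]

theorem Trace.comp_assoc : ∀ {X Y Z W} (T : Trace X Y) (U : Trace Y Z) (V : Trace Z W),
    (T.comp U).comp V = T.comp (U.comp V)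
  | _, _, _, _, .nil X, _, _ => rfl
  | _, _, _, _, .cons d θ s T, U, V => by
      simp only [Trace.comp]
      rw [Trace.comp_assoc]

theorem Trace.rev_comp : ∀ {X Y Z} (T : Trace X Y) (U : Trace Y Z),
    (T.comp U).rev = U.rev.comp T.rev
  | _, _, _, .nil X, U => by simp only [Trace.comp, Trace.rev, Trace.comp_nil]
  | _, _, _, .cons d θ s T, U => by
      simp only [Trace.comp, Trace.rev]
      rw [Trace.rev_comp, Trace.comp_assoc]

theorem Trace.rev_rev : ∀ {X Y} (T : Trace X Y), T.rev.rev = T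
  | _, _, .nil X => rfl
  | _, _, .cons d θ s T => by
      show ((Trace.rev T).comp (.cons (!d) θ (stepRev s) (.nil _))).rev = _
      rw [Trace.rev_comp, Trace.rev_rev]
      show Trace.comp (.cons (!(!d)) θ (stepRev (stepRev s)) (.nil _)) T = _
      cases d
      · rfl
      · rfl

theorem allDir_comp {d} : ∀ {X Y Z} (T : Trace X Y) (U : Trace Y Z),
    Trace.AllDir d T → Trace.AllDir d U → Trace.AllDir d (T.comp U)
  | _, _, _, .nil _, _, _, hU => hU
  | _, _, _, .cons _ _ _ T, U, hT, hU => ⟨hT.1, allDir_comp T U hT.2 hU⟩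

theorem allDir_rev {d} : ∀ {X Y} {T : Trace X Y},
    Trace.AllDir d T → Trace.AllDir (!d) T.rev := by
  intro X Y T hT
  induction T with
  | nil => trivial
  | cons d' θ s T ih =>
      obtain ⟨rfl, hT'⟩ := hT
      exact allDir_comp _ _ (ih hT') ⟨rfl, trivial⟩

/-! ### Causal equivalence infrastructure -/

theorem ceq_comp_right {X Y} {T T' : Trace X Y} (h : CEq T T') :
    ∀ {Z} (U : Trace Y Z), CEq (T.comp U) (T'.comp U) := by
  induction h with
  | refl T => exact fun U => .refl _
  | symm _ ih => exact fun U => (ih U).symm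
  | trans _ _ ih₁ ih₂ => exact fun U => (ih₁ U).trans (ih₂ U)
  | congr s _ ih => exact fun U => .congr s (ih U)
  | cancel s s' T => exact fun U => .cancel s s' (T.comp U)
  | square s₁ t₂ s₂ t₁ hc T => exact fun U => .square s₁ t₂ s₂ t₁ hc (T.comp U)

theorem ceq_comp_left : ∀ {X Y Z} (U : Trace X Y) {T T' : Trace Y Z},
    CEq T T' → CEq (U.comp T) (U.comp T') := by
  intro X Y Z U
  induction U with
  | nil => exact fun h => h
  | cons d θ s U ih => exact fun h => .congr s (ih h)

theorem ceq_cancel' {d X Y θ} (s' : Step (!d) Y θ X) (s : Step d X θ Y)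
    {Z} (T : Trace Y Z) :
    CEq (Trace.cons (!d) θ s' (Trace.cons d θ s T)) T := by
  cases d
  · exact CEq.cancel (d := true) s' s T
  · exact CEq.cancel (d := false) s' s T

theorem ceq_rev {X Y} {T T' : Trace X Y} (h : CEq T T') : CEq T.rev T'.rev := by
  induction h with
  | refl T => exact .refl _
  | symm _ ih => exact ih.symm
  | trans _ _ ih₁ ih₂ => exact ih₁.trans ih₂
  | @congr X Y Z d θ s T T' _ ih =>
      show CEq (T.rev.comp _) (T'.rev.comp _)
      exact ceq_comp_right ih _
  | @cancel X Y Z d θ s s' T =>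
      show CEq ((T.rev.comp _).comp _) T.rev
      rw [Trace.comp_assoc]
      have h2 : CEq ((Trace.cons (!(!d)) θ (stepRev s') (Trace.nil _)).comp
          (Trace.cons (!d) θ (stepRev s) (Trace.nil _))) (Trace.nil _) := by
        show CEq (Trace.cons (!(!d)) θ (stepRev s')
          (Trace.cons (!d) θ (stepRev s) (Trace.nil _))) (Trace.nil _)
        cases d
        · exact CEq.cancel (d := false) (stepRev s') (stepRev s) _
        · exact CEq.cancel (d := true) (stepRev s') (stepRev s) _
      have := ceq_comp_left T.rev h2
      rw [Trace.comp_nil] at this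
      exact this
  | @square X X₁ X₂ Y Z d₁ d₂ θ₁ θ₂ s₁ t₂ s₂ t₁ hc T =>
      show CEq ((T.rev.comp _).comp _) ((T.rev.comp _).comp _)
      rw [Trace.comp_assoc, Trace.comp_assoc]
      apply ceq_comp_left
      exact CEq.square (stepRev t₂) (stepRev s₁) (stepRev t₁) (stepRev s₂) hc.symm' (Trace.nil _)

theorem ceq_cancel_rev_comp : ∀ {X Y Z} (B : Trace X Y) (T : Trace X Z),
    CEq (B.comp (B.rev.comp T)) T := by
  intro X Y Z B
  induction B with
  | nil => exact fun T => .refl T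
  | @cons X V Y d θ s B ih =>
      intro T
      show CEq (Trace.cons d θ s (B.comp (((B.rev).comp _).comp T))) T
      rw [Trace.comp_assoc]
      show CEq (Trace.cons d θ s (B.comp (B.rev.comp
        (Trace.cons (!d) θ (stepRev s) T)))) T
      exact (CEq.congr s (ih _)).trans (CEq.cancel s (stepRev s) T)

/-! ### Length and keyed-multiset facts about traces -/

theorem allbwd_keyed_le : ∀ {V X} (B : Trace V X), Trace.AllDir false B →
    X.keyed ≤ V.keyed
  | _, _, .nil _, _ => le_rfl
  | _, _, @Trace.cons V V₁ X d φ u B₀, hd => by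
      obtain ⟨rfl, hd'⟩ := hd
      have hu : Bwd V φ V₁ := u
      rw [bwd_keyed hu]
      exact (allbwd_keyed_le B₀ hd').trans (Multiset.le_add_right _ _)

theorem bwd_nil_ceq {X} (B : Trace X X) (hB : Trace.AllDir false B) :
    CEq (Trace.nil X) B := by
  cases B with
  | nil => exact .refl _
  | @cons _ V _ d θ u B₀ =>
      exfalso
      obtain ⟨rfl, hd'⟩ := hB
      have hu : Bwd X θ V := u
      have h1 := bwd_card_lt hu
      have h2 := Multiset.card_le_card (allbwd_keyed_le B₀ hd')
      omega

/-! ### The removal lemma: a backward step whose leaves are removed by a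
backward trace can be brought to the front -/

theorem remove : ∀ {V X} (B : Trace V X), Trace.AllDir false B →
    ∀ {θ W} (u : Bwd V θ W), θ.leaves ≤ V.keyed - X.keyed →
    ∃ G : Trace W X, Trace.AllDir false G ∧ G.length + 1 = B.length ∧
      CEq B (Trace.cons false θ u G)
  | _, _, .nil V, _, θ, W, u, hcond => by
      exfalso
      have h0 : θ.leaves = 0 := Multiset.le_zero.mp (by simpa using hcond)
      exact bwd_leaves_ne u h0
  | _, _, @Trace.cons V V₁ X d φ u₁ B₀, hd, θ, W, u, hcond => by
      obtain ⟨rfl, hd'⟩ := hd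
      have hu₁ : Bwd V φ V₁ := u₁
      by_cases hk : θ.key = φ.key
      · obtain ⟨rfl, rfl⟩ := bdet hu₁ u hk.symm
        exact ⟨B₀, hd', rfl, CEq.refl _⟩
      · obtain ⟨hc, Z, v, w⟩ := bbsq hu₁ u (fun h => hk h.symm)
        have hVeq := bwd_keyed hu₁
        have hcond' : θ.leaves ≤ V₁.keyed - X.keyed := by
          rw [Multiset.le_iff_count]
          intro p
          rw [Multiset.count_sub]
          by_cases hp : p ∈ θ.leaves
          · have hc1 := Multiset.le_iff_count.mp hcond p
            rw [Multiset.count_sub] at hc1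
            have hnp : p ∉ φ.leaves := by
              intro hm
              exact hk ((bwd_leaves_key u p hp).symm.trans (bwd_leaves_key hu₁ p hm))
            have hVc : Multiset.count p V.keyed = Multiset.count p V₁.keyed := by
              rw [hVeq, Multiset.count_add, Multiset.count_eq_zero.mpr hnp, add_zero]
            omega
          · rw [Multiset.count_eq_zero.mpr hp]
            exact Nat.zero_le _
        obtain ⟨G', dG, hlen, hce⟩ := remove B₀ hd' v hcond'
        have v' : Step false V₁ θ Z := v
        have w' : Step false W φ Z := w
        have u' : Step false V θ W := u
        refine ⟨Trace.cons false φ w' G', ⟨rfl, dG⟩, ?_, ?_⟩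
        · simp only [Trace.length]
          omega
        · have hsq : CEq (Trace.cons false φ u₁ (Trace.cons false θ v' G'))
              (Trace.cons false θ u' (Trace.cons false φ w' G')) :=
            CEq.square u₁ v' u' w' hc G'
          exact (CEq.congr u₁ hce).trans hsq

/-! ### Any two coinitial and cofinal all-backward traces are causally
equivalent -/

theorem bb : ∀ (n : ℕ) {X Y} (B₁ B₂ : Trace X Y),
    Trace.AllDir false B₁ → Trace.AllDir false B₂ → B₁.length ≤ n → CEq B₁ B₂ := by
  intro n
  induction n with
  | zero =>
      intro X Y B₁ B₂ h1 h2 hlen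
      cases B₁ with
      | nil => exact bwd_nil_ceq B₂ h2
      | cons d θ s B => simp [Trace.length] at hlen
  | succ n ih =>
      intro X Y B₁ B₂ h1 h2 hlen
      cases B₁ with
      | nil => exact bwd_nil_ceq B₂ h2
      | @cons _ X₁ _ d₁ θ₁ u₁ B₁' =>
          cases B₂ with
          | nil => exact (bwd_nil_ceq (Trace.cons d₁ θ₁ u₁ B₁') h1).symm
          | @cons _ X₂ _ d₂ θ₂ u₂ B₂' =>
              obtain ⟨rfl, h2'⟩ := h2
              have hu₂ : Bwd X θ₂ X₂ := u₂
              have hcond : θ₂.leaves ≤ X.keyed - Y.keyed := by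
                have hXeq := bwd_keyed hu₂
                have hle := allbwd_keyed_le B₂' h2'
                rw [Multiset.le_iff_count]
                intro p
                rw [Multiset.count_sub]
                have h3 := Multiset.le_iff_count.mp hle p
                have h4 : Multiset.count p X.keyed
                    = Multiset.count p X₂.keyed + Multiset.count p θ₂.leaves := by
                  rw [hXeq, Multiset.count_add]
                omega
              obtain ⟨G, dG, hlen', hce⟩ := remove (Trace.cons d₁ θ₁ u₁ B₁') h1 hu₂ hcond
              have hlenG : G.length ≤ n := by
                simp only [Trace.length] at hlen hlen'
                omega
              exact hce.trans (CEq.congr u₂ (ih G B₂' dG h2' hlenG))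

theorem ff {X Y} (F₁ F₂ : Trace X Y)
    (h1 : Trace.AllDir true F₁) (h2 : Trace.AllDir true F₂) : CEq F₁ F₂ := by
  have hbb := bb F₁.rev.length F₁.rev F₂.rev (allDir_rev h1) (allDir_rev h2) le_rfl
  have h := ceq_rev hbb
  rwa [Trace.rev_rev, Trace.rev_rev] at h

theorem val {X W Y} (B : Trace X W) (F₂ : Trace W Y) (F₁ : Trace X Y)
    (hB : Trace.AllDir false B) (h2 : Trace.AllDir true F₂)
    (h1 : Trace.AllDir true F₁) : CEq (B.comp F₂) F₁ := by
  have hff : CEq F₂ (B.rev.comp F₁) :=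
    ff F₂ (B.rev.comp F₁) h2 (allDir_comp _ _ (allDir_rev hB) h1)
  exact (ceq_comp_left B hff).trans (ceq_cancel_rev_comp B F₁)

/-! ### Parabolic normalization -/

theorem paraStep : ∀ {V W} (B : Trace V W), Trace.AllDir false B →
    ∀ {Z θ} (s : Fwd Z θ V) {Y} (F : Trace W Y), Trace.AllDir true F →
    ∃ (W' : Proc) (B' : Trace Z W') (F' : Trace W' Y),
      Trace.AllDir false B' ∧ Trace.AllDir true F' ∧
      CEq (Trace.cons true θ s (B.comp F)) (B'.comp F')
  | _, _, .nil V, _, Z, θ, s, Y, F, hF =>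
      ⟨Z, .nil Z, .cons true θ s F, trivial, ⟨rfl, hF⟩, .refl _⟩
  | _, _, @Trace.cons V V₁ W d φ u B₀, hd, Z, θ, s, Y, F, hF => by
      obtain ⟨rfl, hd'⟩ := hd
      have hu : Bwd V φ V₁ := u
      by_cases hk : φ.key = θ.key
      · obtain ⟨rfl, rfl⟩ := rev_uniq s hu hk
        have s' : Step true _ _ _ := s
        exact ⟨_, B₀, F, hd', hF, CEq.cancel s' u (B₀.comp F)⟩
      · obtain ⟨hc, Z', ub, sf⟩ := fbsq s hu hk
        obtain ⟨W', B', F', d1, d2, hce⟩ := paraStep B₀ hd' sf F hF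
        have s' : Step true Z θ V := s
        have ub' : Step false Z φ Z' := ub
        have sf' : Step true Z' θ V₁ := sf
        refine ⟨W', Trace.cons false φ ub' B', F', ⟨rfl, d1⟩, d2, ?_⟩
        have hsq : CEq (Trace.cons true θ s' (Trace.cons false φ u (B₀.comp F)))
            (Trace.cons false φ ub' (Trace.cons true θ sf' (B₀.comp F))) :=
          CEq.square s' u ub' sf' hc (B₀.comp F)
        exact hsq.trans (CEq.congr ub' hce)

theorem para {X Y} (T : Trace X Y) : ∃ (W : Proc) (B : Trace X W) (F : Trace W Y),
    Trace.AllDir false B ∧ Trace.AllDir true F ∧ CEq T (B.comp F) := by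
  induction T with
  | nil X => exact ⟨X, .nil X, .nil X, trivial, trivial, .refl _⟩
  | cons d θ s T ih =>
      obtain ⟨W, B, F, dB, dF, hce⟩ := ih
      cases d
      · exact ⟨W, .cons false θ s B, F, ⟨rfl, dB⟩, dF, CEq.congr s hce⟩
      · obtain ⟨W', B', F', d1, d2, hps⟩ := paraStep B dB s F dF
        exact ⟨W', B', F', d1, d2, (CEq.congr s hce).trans hps⟩

/-! ### Causal consistency for parabolic traces -/

theorem paracc : ∀ (n : ℕ) {X Y W₁ W₂} (B₁ : Trace X W₁) (F₁ : Trace W₁ Y)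
    (B₂ : Trace X W₂) (F₂ : Trace W₂ Y),
    Trace.AllDir false B₁ → Trace.AllDir true F₁ →
    Trace.AllDir false B₂ → Trace.AllDir true F₂ →
    B₂.length ≤ n → CEq (B₁.comp F₁) (B₂.comp F₂) := by
  intro n
  induction n with
  | zero =>
      intro X Y W₁ W₂ B₁ F₁ B₂ F₂ d1 d2 e1 e2 hlen
      cases B₂ with
      | nil => exact val B₁ F₁ F₂ d1 d2 e2
      | cons => simp [Trace.length] at hlen
  | succ n ih =>
      intro X Y W₁ W₂ B₁ F₁ B₂ F₂ d1 d2 e1 e2 hlen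
      cases B₂ with
      | nil => exact val B₁ F₁ F₂ d1 d2 e2
      | @cons _ X₂ _ d₂ θ₂ u₂ B₂' =>
          obtain ⟨rfl, e1'⟩ := e1
          cases B₁ with
          | nil =>
              exact (val (Trace.cons false θ₂ u₂ B₂') F₂ F₁ ⟨rfl, e1'⟩ e2 d2).symm
          | @cons _ X₁ _ d₁ θ₁ u₁ B₁' =>
              obtain ⟨rfl, d1'⟩ := d1
              have hu₁ : Bwd X θ₁ X₁ := u₁
              have hu₂ : Bwd X θ₂ X₂ := u₂
              have hlen' : B₂'.length ≤ n := by
                simp only [Trace.length] at hlen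
                omega
              by_cases hk : θ₁.key = θ₂.key
              · obtain ⟨rfl, rfl⟩ := bdet hu₁ hu₂ hk
                exact CEq.congr u₁ (ih B₁' F₁ B₂' F₂ d1' d2 e1' e2 hlen')
              · obtain ⟨hc, Z, v₂, v₁⟩ := bbsq hu₁ hu₂ hk
                have v₂' : Step false X₁ θ₂ Z := v₂
                have v₁' : Step false X₂ θ₁ Z := v₁
                have f₂ : Step true Z θ₂ X₁ := bwd_fwd v₂
                obtain ⟨W', Bs, Fs, dBs, dFs, hps⟩ := paraStep B₁' d1' (bwd_fwd v₂) F₁ d2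
                have hIH : CEq ((Trace.cons false θ₁ v₁' Bs).comp Fs) (B₂'.comp F₂) :=
                  ih (Trace.cons false θ₁ v₁' Bs) Fs B₂' F₂ ⟨rfl, dBs⟩ dFs e1' e2 hlen'
                have step1 : CEq (B₁'.comp F₁)
                    (Trace.cons false θ₂ v₂' (Trace.cons true θ₂ f₂ (B₁'.comp F₁))) :=
                  (CEq.cancel v₂' f₂ (B₁'.comp F₁)).symm
                have step2 : CEq
                    (Trace.cons false θ₁ u₁ (Trace.cons false θ₂ v₂'
                      (Trace.cons true θ₂ f₂ (B₁'.comp F₁))))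
                    (Trace.cons false θ₂ u₂ (Trace.cons false θ₁ v₁'
                      (Trace.cons true θ₂ f₂ (B₁'.comp F₁)))) :=
                  CEq.square u₁ v₂' u₂ v₁' hc _
                have step3 : CEq (Trace.cons false θ₁ v₁'
                      (Trace.cons true θ₂ f₂ (B₁'.comp F₁)))
                    ((Trace.cons false θ₁ v₁' Bs).comp Fs) :=
                  CEq.congr v₁' hps
                exact (CEq.congr u₁ step1).trans
                  (step2.trans (CEq.congr u₂ (step3.trans hIH)))

end CCSK

open CCSK in
/-- Causal consistency: any two coinitial and cofinal traces are causally
equivalent. -/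
theorem causal_consistency : ∀ (X Y : Proc), Reachable X →
    ∀ T₁ T₂ : Trace X Y, CEq T₁ T₂ := by
  intro X Y _ T₁ T₂
  obtain ⟨W₁, B₁, F₁, d1, d2, h₁⟩ := para T₁
  obtain ⟨W₂, B₂, F₂, e1, e2, h₂⟩ := para T₂
  exact h₁.trans ((paracc B₂.length B₁ F₁ B₂ F₂ d1 d2 e1 e2 le_rfl).trans h₂.symm)
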